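/- For every f ∈ [0,1), E(Dcur^(M)(f,·)) + E(R^(M)(f,·)) = M·log Γ(f), where Dcur^(M)(f,ω) := log(min_{1≤ℓ≤M} min{1, TWR_ℓ^M(f,ω)}) and R^(M)(f,ω) := log(max_{1≤ℓ≤M} max{1, TWR_1^ℓ(f,ω)}). -/

import Mathlib

open Finset

/-- inf of `P / h ℓ` equals `P` divided by sup of `h`, for positive `h`. -/
lemma aux_inf'_div {α : Type*} (s : Finset α) (hs : s.Nonempty) (P : ℝ) (hP : 0 < P)
    (h : α → ℝ) (hh : ∀ a ∈ s, 0 < h a) :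
    s.inf' hs (fun a => P / h a) = P / s.sup' hs h := by
  apply le_antisymm
  · obtain ⟨a0, ha0, hval⟩ := Finset.exists_mem_eq_sup' hs h
    rw [hval]
    exact Finset.inf'_le _ ha0
  · apply Finset.le_inf'
    intro a ha
    gcongr
    · exact hh a ha
    · exact Finset.le_sup' h ha

set_option maxHeartbeats 1000000 in
/-- `E(Dcur^(M)(f,·)) + E(R^(M)(f,·)) = M·log Γ(f)` for every `f ∈ [0,1)`, where
`Dcur^(M)` is the current drawdown log series and `R^(M)` is the run-up log series. -/
theorem stmt_11 (N : ℕ) (hN : 1 ≤ N) (t : Fin N → ℝ) (ht : ∀ i, t i ≠ 0)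
    (hneg : ∃ i, t i < 0) (that : ℝ)
    (hthat : IsGreatest {x : ℝ | ∃ i, t i < 0 ∧ x = |t i|} that)
    (hthat_pos : 0 < that)
    (p : Fin N → ℝ) (hp : ∀ i, 0 < p i) (hpsum : ∑ i, p i = 1)
    (M : ℕ) (hM : 1 ≤ M) :
    ∀ f ∈ Set.Ico (0 : ℝ) 1,
      (∑ ω : Fin M → Fin N, (∏ j, p (ω j)) *
        Real.log ((Finset.univ : Finset (Fin M)).inf'
          (Finset.univ_nonempty_iff.mpr (Fin.pos_iff_nonempty.mp hM))
          (fun ℓ => min 1 (∏ j ∈ Finset.univ.filter (fun j : Fin M => ℓ ≤ j),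
            (1 + f * t (ω j) / that)))))
      + (∑ ω : Fin M → Fin N, (∏ j, p (ω j)) *
        Real.log ((Finset.univ : Finset (Fin M)).sup'
          (Finset.univ_nonempty_iff.mpr (Fin.pos_iff_nonempty.mp hM))
          (fun ℓ => max 1 (∏ j ∈ Finset.univ.filter (fun j : Fin M => j ≤ ℓ),
            (1 + f * t (ω j) / that)))))
      = (M : ℝ) * Real.log (∏ i, (1 + f * t i / that) ^ (p i)) := by
  intro f hf
  obtain ⟨hf0, hf1⟩ := hf
  have hM0 : 0 < M := hM
  have hne : (Finset.univ : Finset (Fin M)).Nonempty :=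
    Finset.univ_nonempty_iff.mpr (Fin.pos_iff_nonempty.mp hM)
  -- positivity of the factors
  have hg : ∀ i, 0 < 1 + f * t i / that := by
    intro i
    have h2 : 1 + f * t i / that = (that + f * t i) / that := by field_simp
    rw [h2]
    apply div_pos _ hthat_pos
    rcases lt_or_gt_of_ne (ht i) with h | h
    · have hle : |t i| ≤ that := hthat.2 ⟨i, h, rfl⟩
      have habs : |t i| = -t i := abs_of_neg h
      nlinarith [mul_le_mul_of_nonneg_left hle hf0,
        mul_lt_mul_of_pos_right hf1 hthat_pos]
    · nlinarith [mul_nonneg hf0 h.le]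
  -- the pointwise identity
  have key : ∀ ω : Fin M → Fin N,
      Real.log ((Finset.univ : Finset (Fin M)).inf' hne
        (fun ℓ => min 1 (∏ j ∈ Finset.univ.filter (fun j : Fin M => ℓ ≤ j),
          (1 + f * t (ω j) / that))))
      + Real.log ((Finset.univ : Finset (Fin M)).sup' hne
        (fun ℓ => max 1 (∏ j ∈ Finset.univ.filter (fun j : Fin M => j ≤ ℓ),
          (1 + f * t (ω j) / that))))
      = ∑ j, Real.log (1 + f * t (ω j) / that) := by
    intro ω
    set c : Fin M → ℝ := fun j => 1 + f * t (ω j) / that with hcdef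
    have hc : ∀ j, 0 < c j := fun j => hg (ω j)
    set Pr : ℝ := ∏ j, c j with hPrdef
    have hPr : 0 < Pr := Finset.prod_pos (fun j _ => hc j)
    set A : Fin M → ℝ := fun ℓ => ∏ j ∈ Finset.univ.filter (fun j : Fin M => j ≤ ℓ), c j
      with hAdef
    set Q : Fin M → ℝ := fun ℓ => ∏ j ∈ Finset.univ.filter (fun j : Fin M => j < ℓ), c j
      with hQdef
    have hApos : ∀ ℓ, 0 < A ℓ := fun ℓ => Finset.prod_pos (fun j _ => hc j)
    have hQpos : ∀ ℓ, 0 < Q ℓ := fun ℓ => Finset.prod_pos (fun j _ => hc j)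
    have hsuf : ∀ ℓ : Fin M,
        (∏ j ∈ Finset.univ.filter (fun j : Fin M => ℓ ≤ j), c j) = Pr / Q ℓ := by
      intro ℓ
      have h := Finset.prod_filter_mul_prod_filter_not Finset.univ
        (fun j : Fin M => ℓ ≤ j) c
      have hnot : Finset.univ.filter (fun j : Fin M => ¬ ℓ ≤ j)
          = Finset.univ.filter (fun j : Fin M => j < ℓ) := by
        apply Finset.filter_congr
        intro j _
        simp [not_le]
      rw [hnot] at h
      rw [eq_div_iff (hQpos ℓ).ne']
      exact h
    -- conversion facts
    have hQA : ∀ a b : Fin M, (a : ℕ) + 1 = (b : ℕ) → Q b = A a := by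
      intro a b hab
      apply Finset.prod_congr _ (fun _ _ => rfl)
      ext j
      simp only [Finset.mem_filter, Finset.mem_univ, true_and, Fin.lt_def, Fin.le_def]
      omega
    have hQ0 : ∀ b : Fin M, (b : ℕ) = 0 → Q b = 1 := by
      intro b hb
      apply Finset.prod_eq_one
      intro j hj
      simp only [Finset.mem_filter, Fin.lt_def, hb] at hj
      omega
    have hAP : ∀ a : Fin M, (a : ℕ) = M - 1 → A a = Pr := by
      intro a ha
      apply Finset.prod_congr _ (fun _ _ => rfl)
      ext j
      have hj := j.isLt
      simp only [Finset.mem_filter, Finset.mem_univ, true_and, Fin.le_def, ha, iff_true]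
      omega
    -- rewrite the inf'
    have h1 : (Finset.univ : Finset (Fin M)).inf' hne
        (fun ℓ => min 1 (∏ j ∈ Finset.univ.filter (fun j : Fin M => ℓ ≤ j), c j))
        = Pr / (Finset.univ : Finset (Fin M)).sup' hne (fun ℓ => max (Q ℓ) Pr) := by
      rw [← aux_inf'_div Finset.univ hne Pr hPr (fun ℓ => max (Q ℓ) Pr)
        (fun ℓ _ => lt_max_of_lt_right hPr)]
      apply Finset.inf'_congr _ rfl
      intro ℓ _
      rw [hsuf ℓ]
      rcases le_total (Q ℓ) Pr with h | h
      · rw [max_eq_right h, div_self hPr.ne',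
          min_eq_left ((one_le_div (hQpos ℓ)).mpr h)]
      · rw [max_eq_left h, min_eq_right ((div_le_one (hQpos ℓ)).mpr h)]
    -- identify the two sups
    have h2 : (Finset.univ : Finset (Fin M)).sup' hne (fun ℓ => max (Q ℓ) Pr)
        = (Finset.univ : Finset (Fin M)).sup' hne (fun ℓ => max 1 (A ℓ)) := by
      apply le_antisymm
      · apply Finset.sup'_le
        intro ℓ _
        apply max_le
        · rcases Nat.eq_zero_or_pos (ℓ : ℕ) with h0 | h0
          · rw [hQ0 ℓ h0]
            exact le_trans (le_max_left _ _)
              (Finset.le_sup' (fun ℓ => max 1 (A ℓ)) (Finset.mem_univ ℓ))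
          · have hlt : (ℓ : ℕ) - 1 < M := by omega
            rw [hQA ⟨(ℓ : ℕ) - 1, hlt⟩ ℓ (by simp; omega)]
            exact le_trans (le_max_right _ _)
              (Finset.le_sup' (fun ℓ => max 1 (A ℓ)) (Finset.mem_univ ⟨(ℓ : ℕ) - 1, hlt⟩))
        · have hlt : M - 1 < M := by omega
          rw [← hAP ⟨M - 1, hlt⟩ rfl]
          exact le_trans (le_max_right _ _)
            (Finset.le_sup' (fun ℓ => max 1 (A ℓ)) (Finset.mem_univ ⟨M - 1, hlt⟩))
      · apply Finset.sup'_le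
        intro ℓ _
        apply max_le
        · have h0 : (0 : ℕ) < M := hM0
          rw [← hQ0 ⟨0, h0⟩ rfl]
          exact le_trans (le_max_left _ _)
            (Finset.le_sup' (fun ℓ => max (Q ℓ) Pr) (Finset.mem_univ ⟨0, h0⟩))
        · rcases eq_or_ne ((ℓ : ℕ) + 1) M with hlast | hlast
          · rw [hAP ℓ (by omega)]
            exact le_trans (le_max_right _ _)
              (Finset.le_sup' (fun ℓ => max (Q ℓ) Pr) (Finset.mem_univ ℓ))
          · have hlt : (ℓ : ℕ) + 1 < M := by omega
            rw [← hQA ℓ ⟨(ℓ : ℕ) + 1, hlt⟩ rfl]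
            exact le_trans (le_max_left _ _)
              (Finset.le_sup' (fun ℓ => max (Q ℓ) Pr) (Finset.mem_univ ⟨(ℓ : ℕ) + 1, hlt⟩))
    have hCpos : 0 < (Finset.univ : Finset (Fin M)).sup' hne (fun ℓ => max 1 (A ℓ)) := by
      obtain ⟨a, ha⟩ := hne
      exact lt_of_lt_of_le one_pos
        (le_trans (le_max_left _ _) (Finset.le_sup' (fun ℓ => max 1 (A ℓ)) ha))
    rw [h1, h2, Real.log_div hPr.ne' hCpos.ne']
    rw [hPrdef, Real.log_prod (fun j _ => (hc j).ne')]
    ring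
  -- combine and use independence
  rw [← Finset.sum_add_distrib]
  have hsum : ∀ ω : Fin M → Fin N,
      (∏ j, p (ω j)) * Real.log ((Finset.univ : Finset (Fin M)).inf'
          (Finset.univ_nonempty_iff.mpr (Fin.pos_iff_nonempty.mp hM))
          (fun ℓ => min 1 (∏ j ∈ Finset.univ.filter (fun j : Fin M => ℓ ≤ j),
            (1 + f * t (ω j) / that))))
      + (∏ j, p (ω j)) * Real.log ((Finset.univ : Finset (Fin M)).sup'
          (Finset.univ_nonempty_iff.mpr (Fin.pos_iff_nonempty.mp hM))
          (fun ℓ => max 1 (∏ j ∈ Finset.univ.filter (fun j : Fin M => j ≤ ℓ),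
            (1 + f * t (ω j) / that))))
      = (∏ j, p (ω j)) * ∑ j, Real.log (1 + f * t (ω j) / that) := by
    intro ω
    rw [← mul_add, key ω]
  rw [Finset.sum_congr rfl (fun ω _ => hsum ω)]
  -- RHS
  have hrhs : Real.log (∏ i, (1 + f * t i / that) ^ (p i))
      = ∑ i, p i * Real.log (1 + f * t i / that) := by
    rw [Real.log_prod (fun i _ => (Real.rpow_pos_of_pos (hg i) _).ne')]
    exact Finset.sum_congr rfl (fun i _ => Real.log_rpow (hg i) _)
  rw [hrhs]
  -- independence computation
  set L : Fin N → ℝ := fun i => Real.log (1 + f * t i / that) with hLdef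
  calc ∑ ω : Fin M → Fin N, (∏ j, p (ω j)) * ∑ k, L (ω k)
      = ∑ ω : Fin M → Fin N, ∑ k, (∏ j, p (ω j)) * L (ω k) := by
        simp [Finset.mul_sum]
    _ = ∑ k : Fin M, ∑ ω : Fin M → Fin N, (∏ j, p (ω j)) * L (ω k) := Finset.sum_comm
    _ = ∑ k : Fin M, ∑ ω : Fin M → Fin N,
          ∏ j, (if j = k then p (ω j) * L (ω j) else p (ω j)) := by
        apply Finset.sum_congr rfl
        intro k _
        apply Finset.sum_congr rfl
        intro ω _
        have : ∀ j : Fin M, (if j = k then p (ω j) * L (ω j) else p (ω j))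
            = p (ω j) * (if j = k then L (ω j) else 1) := by
          intro j; split_ifs <;> ring
        rw [Finset.prod_congr rfl (fun j _ => this j), Finset.prod_mul_distrib,
          Finset.prod_ite_eq' Finset.univ k (fun j => L (ω j))]
        simp
    _ = ∑ k : Fin M, ∏ j : Fin M, ∑ i : Fin N, (if j = k then p i * L i else p i) := by
        apply Finset.sum_congr rfl
        intro k _
        rw [Finset.prod_univ_sum]
        rw [Fintype.piFinset_univ]
    _ = ∑ k : Fin M, ∑ i, p i * L i := by
        apply Finset.sum_congr rfl
        intro k _
        have : ∀ j : Fin M, (∑ i : Fin N, (if j = k then p i * L i else p i))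
            = (if j = k then ∑ i, p i * L i else 1) := by
          intro j
          split_ifs with h
          · rfl
          · exact hpsum
        rw [Finset.prod_congr rfl (fun j _ => this j),
          Finset.prod_ite_eq' Finset.univ k (fun _ => ∑ i, p i * L i)]
        simp
    _ = (M : ℝ) * ∑ i, p i * L i := by
        rw [Finset.sum_const, Finset.card_univ, Fintype.card_fin, nsmul_eq_mul]
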